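/- Let α > -1, δ > 0, 0 < ρ₀ < ρ ≤ 1, 0 ≤ σ, and β = α+1 or β = α+2 with β - σ - 1 > -1. Define I(x) = e^{-x/2} ∫_0^δ Z_{β,x}(ρ e^{-t}) ρ e^{-t} t^σ dt, where Z_{β,x}(w) = (1-w)^{-β-1} e^{-xw/(1-w)}. Then there is a constant C = C(β,σ,δ,ρ₀), independent of ρ, such that |I(x)| ≤ C x^{σ-β} for all x > 0. -/

import Mathlib

open Real

/-- The Laguerre generating function `Z_{β,x}(w) = (1-w)^{-β-1} e^{-xw/(1-w)}`. -/
noncomputable def Zfun (β x w : ℝ) : ℝ :=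
  (1 - w) ^ (-β - 1) * Real.exp (-x * w / (1 - w))

open Set MeasureTheory in
lemma Zaux_integrable {s b : ℝ} (hs : -1 < s) (hb : 0 < b) :
    IntegrableOn (fun v : ℝ => v ^ s * Real.exp (-(b * v))) (Ioi (0:ℝ)) := by
  have h := integrableOn_rpow_mul_exp_neg_mul_rpow hs zero_lt_one hb
  refine h.congr_fun (fun v hv => ?_) measurableSet_Ioi
  simp only [Real.rpow_one, neg_mul]

open Set MeasureTheory in
lemma Zaux_integral {s b : ℝ} (hs : -1 < s) (hb : 0 < b) :
    ∫ v in Ioi (0:ℝ), v ^ s * Real.exp (-(b * v)) = (1/b) ^ (s+1) * Real.Gamma (s+1) := by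
  have h := Real.integral_rpow_mul_exp_neg_mul_Ioi (a := s + 1) (r := b) (by linarith) hb
  rw [show s + 1 - 1 = s from by ring] at h
  exact h

open Set MeasureTheory in
set_option maxHeartbeats 2000000 in
/-- For `β = α+1` or `β = α+2`, `0 ≤ σ` with `β - σ - 1 > -1`, the quantity
`I(x) = e^{-x/2} ∫_0^δ Z_{β,x}(ρ e^{-t}) ρ e^{-t} t^σ dt` satisfies
`|I(x)| ≤ C x^{σ-β}` with `C = C(β,σ,δ,ρ₀)` independent of `ρ ∈ (ρ₀,1]`. -/
theorem Zfun_integral_bound :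
    ∀ α δ ρ₀ σ β : ℝ, α > -1 → 0 < δ → 0 < ρ₀ → 0 ≤ σ →
      (β = α + 1 ∨ β = α + 2) → β - σ - 1 > -1 →
      ∃ C : ℝ, ∀ ρ : ℝ, ρ₀ < ρ → ρ ≤ 1 → ∀ x : ℝ, 0 < x →
        |Real.exp (-x / 2) *
            ∫ t in (0 : ℝ)..δ,
              Zfun β x (ρ * Real.exp (-t)) * (ρ * Real.exp (-t)) * t ^ σ| ≤
          C * x ^ (σ - β) := by
  intro α δ ρ₀ σ β hα hδ hρ₀ hσ hβ hβσ
  have hβσ' : 0 < β - σ := by linarith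
  set w₀ : ℝ := ρ₀ * Real.exp (-δ) with hw₀def
  have hw₀ : 0 < w₀ := by rw [hw₀def]; positivity
  set A : ℝ := (1+δ) ^ σ * 2 ^ (β+1-σ) with hAdef
  have hA : 0 < A := by rw [hAdef]; positivity
  set K : ℝ := A / w₀ with hKdef
  have hK : 0 < K := by rw [hKdef]; exact div_pos hA hw₀
  clear_value w₀ A K
  refine ⟨K * Real.Gamma (β - σ), ?_⟩
  intro ρ hρ₁ hρ₂ x hx
  have hρpos : 0 < ρ := lt_trans hρ₀ hρ₁
  -- the substitution function and its derivative
  set u : ℝ → ℝ := fun t => 1/2 + ρ * Real.exp (-t) / (1 - ρ * Real.exp (-t)) with hudef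
  set u' : ℝ → ℝ := fun t => -(ρ * Real.exp (-t)) / (1 - ρ * Real.exp (-t)) ^ 2 with hu'def
  set g : ℝ → ℝ := fun v => v ^ (β - σ - 1) * Real.exp (-(x * v)) with hgdef
  clear_value u u' g
  -- basic facts about w = ρ e^{-t} for t ∈ Ioc 0 δ
  have hwfacts : ∀ t ∈ Ioc (0:ℝ) δ, w₀ ≤ ρ * Real.exp (-t) ∧ 0 < ρ * Real.exp (-t) ∧
      ρ * Real.exp (-t) < 1 := by
    intro t ht
    obtain ⟨ht0, htδ⟩ := ht
    refine ⟨?_, by positivity, ?_⟩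
    · rw [hw₀def]
      exact mul_le_mul hρ₁.le (Real.exp_le_exp.2 (by linarith)) (Real.exp_pos _).le hρpos.le
    · calc ρ * Real.exp (-t) ≤ 1 * Real.exp (-t) := by
            exact mul_le_mul_of_nonneg_right hρ₂ (Real.exp_pos _).le
        _ < 1 := by rw [one_mul]; exact Real.exp_lt_one_iff.2 (by linarith)
  -- pointwise bound
  have hpt : ∀ t ∈ Ioc (0:ℝ) δ,
      |Real.exp (-x/2) * (Zfun β x (ρ * Real.exp (-t)) * (ρ * Real.exp (-t)) * t ^ σ)|
        ≤ K * (|u' t| * g (u t)) := by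
    intro t ht
    obtain ⟨hle, hwpos, hw1⟩ := hwfacts t ht
    obtain ⟨ht0, htδ⟩ := ht
    set w : ℝ := ρ * Real.exp (-t) with hwdef
    clear_value w
    have h1w : 0 < 1 - w := by linarith
    have hut : u t = 1/2 + w / (1 - w) := by rw [hwdef, hudef]
    have hu'val : u' t = -(w / (1 - w) ^ 2) := by
      rw [hwdef, hu'def]; ring
    have huhalf : 1/2 ≤ u t := by
      rw [hut]
      nlinarith [div_nonneg hwpos.le h1w.le]
    have hupos : 0 < u t := lt_of_lt_of_le one_half_pos huhalf
    have huinv : u t + 1/2 = (1 - w)⁻¹ := by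
      rw [hut]; field_simp; ring
    -- t ≤ (1+δ)(1-w)
    have htw : t ≤ (1+δ) * (1 - w) := by
      have h1 : t + 1 ≤ Real.exp t := Real.add_one_le_exp t
      have h2 : Real.exp (-t) * Real.exp t = 1 := by
        rw [← Real.exp_add]; simp
      have h3 : w ≤ Real.exp (-t) := by
        rw [hwdef]; nlinarith [Real.exp_pos (-t)]
      nlinarith [Real.exp_pos t, Real.exp_pos (-t)]
    -- the exponential factor
    have hexp : Real.exp (-x/2) * Real.exp (-x * w / (1 - w)) = Real.exp (-(x * u t)) := by
      rw [← Real.exp_add]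
      congr 1
      rw [hut]
      field_simp
      ring
    set E : ℝ := Real.exp (-(x * u t)) with hEdef
    clear_value E
    have hEpos : 0 < E := by rw [hEdef]; exact Real.exp_pos _
    have hrpow0 : (0:ℝ) ≤ (1 - w) ^ (-β - 1) := (Real.rpow_pos_of_pos h1w _).le
    -- rewrite the left side
    have hFeq : Real.exp (-x/2) * (Zfun β x w * w * t ^ σ)
        = (1 - w) ^ (-β - 1) * w * t ^ σ * E := by
      rw [Zfun, ← hexp]; ring
    have hFnonneg : 0 ≤ (1 - w) ^ (-β - 1) * w * t ^ σ * E :=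
      mul_nonneg (mul_nonneg (mul_nonneg hrpow0 hwpos.le)
        (Real.rpow_nonneg ht0.le σ)) hEpos.le
    rw [hFeq, abs_of_nonneg hFnonneg]
    -- |u' t| = w / (1-w)^2
    have hu't : |u' t| = w / (1 - w) ^ 2 := by
      rw [hu'val, abs_neg, abs_of_nonneg (by positivity)]
    rw [hu't]
    simp only [hgdef]
    rw [← hEdef]
    -- key inequalities
    have key1 : t ^ σ ≤ (1+δ) ^ σ * (1 - w) ^ σ := by
      rw [← Real.mul_rpow (by positivity) h1w.le]
      exact Real.rpow_le_rpow ht0.le htw hσ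
    have key2 : (1 - w) ^ (σ - β - 1) ≤ 2 ^ (β+1-σ) * (u t) ^ (β+1-σ) := by
      have e1 : (1 - w) ^ (σ - β - 1) = (u t + 1/2) ^ (β+1-σ) := by
        rw [huinv, Real.inv_rpow h1w.le, ← Real.rpow_neg h1w.le,
          show -(β+1-σ) = σ - β - 1 from by ring]
      rw [e1]
      calc (u t + 1/2) ^ (β+1-σ) ≤ (2 * u t) ^ (β+1-σ) := by
            apply Real.rpow_le_rpow (by positivity) (by linarith) (by linarith)
        _ = 2 ^ (β+1-σ) * (u t) ^ (β+1-σ) := Real.mul_rpow (by norm_num) hupos.le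
    have key3 : (u t) ^ (β+1-σ) = (u t) ^ (β-σ-1) * (u t) ^ (2:ℕ) := by
      rw [← Real.rpow_natCast (u t) 2, ← Real.rpow_add hupos]
      congr 1
      push_cast
      ring
    have key4 : (u t) ^ (2:ℕ) ≤ w / (1 - w) ^ 2 / w₀ := by
      have h5 : w / (1 - w) ^ 2 = w * (u t + 1/2) ^ 2 := by
        rw [huinv]
        field_simp
      rw [le_div_iff₀ hw₀, h5]
      have h6 : (u t) ^ 2 ≤ (u t + 1/2) ^ 2 :=
        pow_le_pow_left₀ hupos.le (by linarith) 2
      calc (u t) ^ (2:ℕ) * w₀ ≤ (u t + 1/2) ^ 2 * w :=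
            mul_le_mul h6 hle hw₀.le (sq_nonneg _)
        _ = w * (u t + 1/2) ^ 2 := mul_comm _ _
    -- chain
    calc (1 - w) ^ (-β - 1) * w * t ^ σ * E
        ≤ (1 - w) ^ (-β - 1) * 1 * ((1+δ) ^ σ * (1 - w) ^ σ) * E := by
          apply mul_le_mul_of_nonneg_right _ hEpos.le
          exact mul_le_mul (mul_le_mul le_rfl hw1.le hwpos.le hrpow0) key1
            (Real.rpow_nonneg ht0.le σ) (by positivity)
      _ = (1+δ) ^ σ * (1 - w) ^ (σ - β - 1) * E := by
          rw [show σ - β - 1 = -β-1 + σ from by ring, Real.rpow_add h1w]; ring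
      _ ≤ (1+δ) ^ σ * (2 ^ (β+1-σ) * (u t) ^ (β+1-σ)) * E := by
          apply mul_le_mul_of_nonneg_right _ hEpos.le
          exact mul_le_mul_of_nonneg_left key2 (by positivity)
      _ = A * ((u t) ^ (β-σ-1)) * (u t) ^ (2:ℕ) * E := by
          rw [key3, hAdef]; ring
      _ ≤ A * ((u t) ^ (β-σ-1)) * (w / (1 - w) ^ 2 / w₀) * E := by
          apply mul_le_mul_of_nonneg_right _ hEpos.le
          refine mul_le_mul_of_nonneg_left key4 ?_
          exact mul_nonneg hA.le (Real.rpow_nonneg hupos.le _)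
      _ = K * (w / (1 - w) ^ 2 * ((u t) ^ (β - σ - 1) * E)) := by
          rw [hKdef]; ring
  -- derivative of u on Ioo 0 δ
  have hderiv : ∀ t ∈ Ioo (0:ℝ) δ, HasDerivWithinAt u (u' t) (Ioo (0:ℝ) δ) t := by
    intro t ht
    obtain ⟨hle, hwpos, hw1⟩ := hwfacts t ⟨ht.1, ht.2.le⟩
    have h1w : (1 : ℝ) - ρ * Real.exp (-t) ≠ 0 := by
      intro h; nlinarith
    have hw : HasDerivAt (fun s : ℝ => ρ * Real.exp (-s)) (-(ρ * Real.exp (-t))) t := by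
      have h1 : HasDerivAt (fun s : ℝ => Real.exp (-s)) (-Real.exp (-t)) t := by
        simpa [Function.comp_def] using (Real.hasDerivAt_exp (-t)).comp t (hasDerivAt_neg t)
      have := h1.const_mul ρ
      simpa [mul_comm, mul_assoc, mul_neg] using this
    have h2 : HasDerivAt (fun s : ℝ => 1 - ρ * Real.exp (-s)) (ρ * Real.exp (-t)) t := by
      simpa [Pi.sub_def] using (hasDerivAt_const t (1:ℝ)).sub hw
    have h3 := hw.div h2 h1w
    have h4 := (hasDerivAt_const t ((1:ℝ)/2)).add h3
    have h5 : u' t = (-(ρ * Real.exp (-t)) * (1 - ρ * Real.exp (-t)) -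
        ρ * Real.exp (-t) * (ρ * Real.exp (-t))) / (1 - ρ * Real.exp (-t)) ^ 2 := by
      rw [hu'def]; ring
    rw [hudef, h5]
    rw [zero_add] at h4
    exact h4.hasDerivWithinAt
  -- injectivity of u on Ioo 0 δ
  have hinj : InjOn u (Ioo (0:ℝ) δ) := by
    intro t₁ h₁ t₂ h₂ heq
    obtain ⟨_, hw₁pos, hw₁1⟩ := hwfacts t₁ ⟨h₁.1, h₁.2.le⟩
    obtain ⟨_, hw₂pos, hw₂1⟩ := hwfacts t₂ ⟨h₂.1, h₂.2.le⟩
    rw [hudef] at heq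
    simp only at heq
    have e1 : ρ * Real.exp (-t₁) / (1 - ρ * Real.exp (-t₁))
        = ρ * Real.exp (-t₂) / (1 - ρ * Real.exp (-t₂)) := by linarith
    have hne₁ : (1 : ℝ) - ρ * Real.exp (-t₁) ≠ 0 := by intro h; linarith
    have hne₂ : (1 : ℝ) - ρ * Real.exp (-t₂) ≠ 0 := by intro h; linarith
    rw [div_eq_div_iff hne₁ hne₂] at e1
    have e2 : Real.exp (-t₁) = Real.exp (-t₂) := by
      have : ρ * Real.exp (-t₁) = ρ * Real.exp (-t₂) := by linear_combination e1
      exact mul_left_cancel₀ (ne_of_gt hρpos) this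
    have := Real.exp_injective e2
    linarith [neg_injective this]
  -- image of u lies in Ioi 0
  have himg : u '' Ioo (0:ℝ) δ ⊆ Ioi (0:ℝ) := by
    rintro v ⟨t, ht, rfl⟩
    obtain ⟨_, hwpos, hw1⟩ := hwfacts t ⟨ht.1, ht.2.le⟩
    have h0 : (0:ℝ) ≤ ρ * Real.exp (-t) / (1 - ρ * Real.exp (-t)) :=
      div_nonneg hwpos.le (by linarith)
    rw [hudef]
    simp only [mem_Ioi]
    linarith
  -- integrability of g on Ioi 0
  have hgint : IntegrableOn g (Ioi (0:ℝ)) := by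
    rw [hgdef]; exact Zaux_integrable (by linarith) hx
  have hgnonneg : ∀ v ∈ Ioi (0:ℝ), 0 ≤ g v := fun v hv => by
    simp only [hgdef]
    have : (0:ℝ) < v := hv
    positivity
  -- change of variables
  have hchg : ∫ t in Ioo (0:ℝ) δ, |u' t| * g (u t) = ∫ v in u '' Ioo (0:ℝ) δ, g v := by
    rw [integral_image_eq_integral_abs_deriv_smul measurableSet_Ioo hderiv hinj g]
    simp [smul_eq_mul]
  have hint_img : IntegrableOn (fun t => |u' t| * g (u t)) (Ioo (0:ℝ) δ) := by
    have h := (integrableOn_image_iff_integrableOn_abs_deriv_smul measurableSet_Ioo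
      hderiv hinj g).mp (hgint.mono_set himg)
    simpa [smul_eq_mul] using h
  -- main estimate
  have hIoc_eq : ∫ t in Ioc (0:ℝ) δ, |u' t| * g (u t) = ∫ t in Ioo (0:ℝ) δ, |u' t| * g (u t) :=
    setIntegral_congr_set (Ioo_ae_eq_Ioc).symm
  have hgval : ∫ v in Ioi (0:ℝ), g v = Real.Gamma (β - σ) * x ^ (σ - β) := by
    have h := Zaux_integral (s := β - σ - 1) (b := x) (by linarith) hx
    have e1 : β - σ - 1 + 1 = β - σ := by ring
    rw [e1] at h
    simp only [hgdef]
    rw [h, one_div, ← Real.rpow_neg_one x, ← Real.rpow_mul hx.le]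
    rw [show (-1 : ℝ) * (β - σ) = σ - β from by ring]
    ring
  have hKbound : Integrable (fun t => K * (|u' t| * g (u t)))
      (volume.restrict (Ioc (0:ℝ) δ)) := by
    have h1 : IntegrableOn (fun t => |u' t| * g (u t)) (Ioc (0:ℝ) δ) :=
      hint_img.congr_set_ae Ioo_ae_eq_Ioc.symm
    exact h1.const_mul K
  calc |Real.exp (-x/2) * ∫ t in (0:ℝ)..δ,
          Zfun β x (ρ * Real.exp (-t)) * (ρ * Real.exp (-t)) * t ^ σ|
      = |∫ t in Ioc (0:ℝ) δ, Real.exp (-x/2) *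
          (Zfun β x (ρ * Real.exp (-t)) * (ρ * Real.exp (-t)) * t ^ σ)| := by
        rw [intervalIntegral.integral_of_le hδ.le, MeasureTheory.integral_const_mul]
    _ ≤ ∫ t in Ioc (0:ℝ) δ, |Real.exp (-x/2) *
          (Zfun β x (ρ * Real.exp (-t)) * (ρ * Real.exp (-t)) * t ^ σ)| :=
        by simpa only [Real.norm_eq_abs] using
          MeasureTheory.norm_integral_le_integral_norm
            (μ := volume.restrict (Ioc (0:ℝ) δ))
            (fun t => Real.exp (-x/2) *
              (Zfun β x (ρ * Real.exp (-t)) * (ρ * Real.exp (-t)) * t ^ σ))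
    _ ≤ ∫ t in Ioc (0:ℝ) δ, K * (|u' t| * g (u t)) := by
        refine integral_mono_of_nonneg (ae_of_all _ fun t => abs_nonneg _) hKbound ?_
        exact (ae_restrict_iff' measurableSet_Ioc).mpr (ae_of_all _ hpt)
    _ = K * ∫ t in Ioo (0:ℝ) δ, |u' t| * g (u t) := by
        rw [MeasureTheory.integral_const_mul, hIoc_eq]
    _ = K * ∫ v in u '' Ioo (0:ℝ) δ, g v := by rw [hchg]
    _ ≤ K * ∫ v in Ioi (0:ℝ), g v := by
        refine mul_le_mul_of_nonneg_left ?_ hK.le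
        exact setIntegral_mono_set hgint
          (ae_restrict_of_forall_mem measurableSet_Ioi hgnonneg)
          (HasSubset.Subset.eventuallyLE himg)
    _ = K * Real.Gamma (β - σ) * x ^ (σ - β) := by rw [hgval]; ring
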